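/- For every integer n ≥ 3, the following three statements are equivalent: (i) f(n) ≠ L(n); (ii) f(n) = L(n) − 1; (iii) C(n, L(n) − 1) > 2^n/(n+1). -/
import Mathlib


noncomputable def f (n : ℕ) : ℕ :=
  sInf {k : ℕ | 0 < k ∧ (n.choose k : ℝ) > 2 ^ n / (n + 1)}

noncomputable def L (n : ℕ) : ℕ :=
  sInf {k : ℕ | 0 < k ∧ (n.choose k : ℝ) > 2 ^ n / n}

lemma central_aux (n : ℕ) (hn : 3 ≤ n) : 2 ^ n < n * n.choose (n / 2) := by
  have hM : 3 ≤ n.choose (n / 2) := by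
    have h1 := Nat.choose_le_middle 1 n
    rw [Nat.choose_one_right] at h1
    omega
  obtain ⟨m, rfl⟩ : ∃ m, n = m + 2 := ⟨n - 2, by omega⟩
  have hsum := Nat.sum_range_choose (m + 2)
  rw [Finset.sum_range_succ'] at hsum
  rw [Finset.sum_range_succ] at hsum
  have hb : ∑ i ∈ Finset.range (m + 1), (m + 2).choose (i + 1)
      ≤ (m + 1) * (m + 2).choose ((m + 2) / 2) := by
    have := Finset.sum_le_card_nsmul (Finset.range (m + 1))
      (fun i => (m + 2).choose (i + 1)) ((m + 2).choose ((m + 2) / 2))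
      (fun i _ => Nat.choose_le_middle (i + 1) (m + 2))
    simpa [Finset.card_range, mul_comm] using this
  simp only [Nat.choose_self, Nat.choose_zero_right] at hsum
  nlinarith [hM, hb, hsum]

lemma succ_lt_two_pow_aux (n : ℕ) (hn : 3 ≤ n) : n + 1 < 2 ^ n := by
  induction n with
  | zero => omega
  | succ k ih =>
    rcases Nat.lt_or_ge k 3 with hk | hk
    · interval_cases k <;> simp_all
    · have := ih hk
      have : 2 ^ (k + 1) = 2 * 2 ^ k := by ring
      omega

theorem f_ne_L_iff (n : ℕ) (hn : 3 ≤ n) :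
    (f n ≠ L n ↔ f n = L n - 1) ∧
    (f n = L n - 1 ↔ (n.choose (L n - 1) : ℝ) > 2 ^ n / (n + 1)) := by
  have hnR : (0 : ℝ) < n := by exact_mod_cast (by omega : 0 < n)
  have hn1R : (0 : ℝ) < (n : ℝ) + 1 := by positivity
  have hcenN : 2 ^ n < n * n.choose (n / 2) := central_aux n hn
  have hcenR : (n.choose (n / 2) : ℝ) > 2 ^ n / n := by
    rw [gt_iff_lt, div_lt_iff₀ hnR]
    have : ((2 ^ n : ℕ) : ℝ) < ((n * n.choose (n / 2) : ℕ) : ℝ) := by exact_mod_cast hcenN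
    push_cast at this
    linarith
  have hmemB : n / 2 ∈ {k : ℕ | 0 < k ∧ (n.choose k : ℝ) > 2 ^ n / n} :=
    ⟨by omega, hcenR⟩
  have hBne : {k : ℕ | 0 < k ∧ (n.choose k : ℝ) > 2 ^ n / n}.Nonempty := ⟨_, hmemB⟩
  have hLmem : 0 < L n ∧ (n.choose (L n) : ℝ) > 2 ^ n / n := Nat.sInf_mem hBne
  have hL_le : L n ≤ n / 2 := Nat.sInf_le hmemB
  have hdivlt : (2 : ℝ) ^ n / (n + 1) < 2 ^ n / n := by
    apply div_lt_div_of_pos_left (by positivity) hnR (by linarith)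
  have hAmemL : L n ∈ {k : ℕ | 0 < k ∧ (n.choose k : ℝ) > 2 ^ n / (n + 1)} :=
    ⟨hLmem.1, lt_trans hdivlt hLmem.2⟩
  have hAne : {k : ℕ | 0 < k ∧ (n.choose k : ℝ) > 2 ^ n / (n + 1)}.Nonempty := ⟨_, hAmemL⟩
  have hfmem : 0 < f n ∧ (n.choose (f n) : ℝ) > 2 ^ n / (n + 1) := Nat.sInf_mem hAne
  have hfL : f n ≤ L n := Nat.sInf_le hAmemL
  -- key step: f n ≥ L n - 1
  have hge : L n - 1 ≤ f n := by
    by_contra hcon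
    push_neg at hcon
    have hf2 : f n + 2 ≤ L n := by omega
    have hnotB : f n + 1 ∉ {k : ℕ | 0 < k ∧ (n.choose k : ℝ) > 2 ^ n / n} := by
      intro hmem
      have hLfle : L n ≤ f n + 1 := Nat.sInf_le hmem
      omega
    have hle : (n.choose (f n + 1) : ℝ) ≤ 2 ^ n / n := by
      by_contra hgt
      push_neg at hgt
      exact hnotB ⟨Nat.succ_pos _, hgt⟩
    have h1 : 2 ^ n < n.choose (f n) * (n + 1) := by
      have h := hfmem.2
      rw [gt_iff_lt, div_lt_iff₀ hn1R] at h
      exact_mod_cast h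
    have h2 : n.choose (f n + 1) * n ≤ 2 ^ n := by
      rw [le_div_iff₀ hnR] at hle
      exact_mod_cast hle
    have h3 : n.choose (f n + 1) * (f n + 1) = n.choose (f n) * (n - f n) :=
      Nat.choose_succ_right_eq n (f n)
    have hfn : f n + 2 ≤ n / 2 := le_trans hf2 hL_le
    obtain ⟨d, hd⟩ : ∃ d, n = f n + d := ⟨n - f n, by omega⟩
    have hd' : n - f n = d := by omega
    rw [hd'] at h3
    have hCpos : 0 < n.choose (f n) := Nat.choose_pos (by omega)
    have h2L : 2 * L n ≤ n := by omega
    -- n * d ≥ (n+1) * (f n + 1)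
    have hkey : (n + 1) * (f n + 1) ≤ n * d := by nlinarith [hfmem.1]
    have e1 : n.choose (f n + 1) * n * (f n + 1) ≤ 2 ^ n * (f n + 1) :=
      Nat.mul_le_mul_right _ h2
    have e2 : 2 ^ n * (f n + 1) < n.choose (f n) * (n + 1) * (f n + 1) := by
      have := Nat.mul_lt_mul_of_lt_of_le h1 (le_refl (f n + 1)) (by omega)
      exact this
    have e4 : n.choose (f n) * ((n + 1) * (f n + 1)) ≤ n.choose (f n) * (n * d) :=
      Nat.mul_le_mul_left _ hkey
    nlinarith [e1, e2, e4, h3]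
  have hL1 : 1 ≤ L n := hLmem.1
  constructor
  · constructor <;> intro h <;> omega
  · constructor
    · intro h
      rw [← h]
      exact hfmem.2
    · intro h
      have hL2 : 2 ≤ L n := by
        by_contra hc
        have hL1' : L n - 1 = 0 := by omega
        rw [hL1'] at h
        simp only [Nat.choose_zero_right, Nat.cast_one] at h
        rw [gt_iff_lt, div_lt_one hn1R] at h
        have h2 : (n : ℝ) + 1 < 2 ^ n := by
          have := succ_lt_two_pow_aux n hn
          exact_mod_cast this
        linarith
      have hmemA : L n - 1 ∈ {k : ℕ | 0 < k ∧ (n.choose k : ℝ) > 2 ^ n / (n + 1)} :=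
        ⟨by omega, h⟩
      have hfle : f n ≤ L n - 1 := Nat.sInf_le hmemA
      omega
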